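/- Let u = x_1^{a_1}···x_n^{a_n} with a_1 > 0 and v = x_1^{b_1}···x_n^{b_n} be monomials of degree d with u ≥_lex v, and let I = (L(u,v)) be a completely lexsegment ideal which has linear quotients with respect to the ordering of L(u,v) given by ≺. If w ∈ L(u,v) and s ∈ set(w), then: g(x_s·w) = x_s·w/x_1 if x_s·w ≥_lex x_1·v, and g(x_s·w) = x_s·w/x_{max(w)} if x_s·w <_lex x_1·v. -/

import Mathlib

open MvPolynomial

/-- Exponent vectors of monomials in `n` variables; index `i` corresponds to the variable
`x_{i+1}`, so that the `toLex` order on exponent vectors is the lexicographic order on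
monomials with `x_1 > x_2 > ⋯ > x_n`. -/
abbrev Mon (n : ℕ) := Fin n →₀ ℕ

/-- The degree of a monomial. -/
def monDeg {n : ℕ} (m : Mon n) : ℕ := ∑ i, m i

/-- The lexsegment `L(u,v)`: monomials of degree `d` with `u ≥_lex w ≥_lex v`. -/
def lexSeg {n : ℕ} (d : ℕ) (u v : Mon n) : Set (Mon n) :=
  {w | monDeg w = d ∧ toLex v ≤ toLex w ∧ toLex w ≤ toLex u}

/-- The monomial ideal generated by a set of monomials. -/
noncomputable def monomialIdeal {n : ℕ} (k : Type*) [Field k] (T : Set (Mon n)) :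
    Ideal (MvPolynomial (Fin n) k) :=
  Ideal.span ((fun m => (monomial m (1 : k) : MvPolynomial (Fin n) k)) '' T)

/-- The order `≺` on monomials of a fixed degree: `w ≺ w'` iff `ν₁(w) < ν₁(w')`, or
`ν₁(w) = ν₁(w')` and `w >_lex w'`. -/
def prec {n : ℕ} [NeZero n] (z w : Mon n) : Prop :=
  z 0 < w 0 ∨ (z 0 = w 0 ∧ toLex w < toLex z)

/-- A set `T` of monomials, totally ordered by a relation `r`, generates an ideal with linear
quotients with respect to `r` if for every `w ∈ T` the colon ideal of the ideal generated by
the earlier monomials `{z ∈ T | r z w}` by `w` is generated by a subset of the variables. -/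
noncomputable def hasLinearQuotientsWrt {n : ℕ} (k : Type*) [Field k] (T : Set (Mon n))
    (r : Mon n → Mon n → Prop) : Prop :=
  ∀ w ∈ T, ∃ V : Set (Fin n),
    Submodule.colon (monomialIdeal k {z ∈ T | r z w})
        (Ideal.span {(monomial w (1 : k) : MvPolynomial (Fin n) k)}) =
      Ideal.span ((fun i => (X i : MvPolynomial (Fin n) k)) '' V)

/-- `max(m)`: the largest index of a variable dividing the monomial `m`. -/
def maxVar {n : ℕ} [NeZero n] (m : Mon n) : Fin n := WithBot.unbotD 0 m.support.max

/-- The shadow of a set of monomials. -/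
def shad {n : ℕ} (T : Set (Mon n)) : Set (Mon n) :=
  {m | ∃ t ∈ T, ∃ i : Fin n, m = t + Finsupp.single i 1}

/-- A set of monomials is a lexsegment if it is of the form `L(u,v)`. -/
def IsLexSegSet {n : ℕ} (T : Set (Mon n)) : Prop :=
  ∃ (e : ℕ) (u v : Mon n), monDeg u = e ∧ monDeg v = e ∧ toLex v ≤ toLex u ∧ T = lexSeg e u v

/-- A lexsegment is a completely lexsegment if all its iterated shadows are lexsegments. -/
def IsCompletelyLexSeg {n : ℕ} (T : Set (Mon n)) : Prop :=
  ∀ j : ℕ, IsLexSegSet (shad^[j] T)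

/-- `set(w)` for `w ∈ L(u,v)`: the set of `s` with `x_s · w ∈ I_{≺ w}`, where `I_{≺ w}` is the
ideal generated by `{z ∈ L(u,v) | z ≺ w}`. -/
noncomputable def setW {n : ℕ} [NeZero n] (k : Type*) [Field k] (d : ℕ) (u v : Mon n)
    (w : Mon n) : Set (Fin n) :=
  {s | (monomial (w + Finsupp.single s 1) (1 : k) : MvPolynomial (Fin n) k) ∈
    monomialIdeal k {z ∈ lexSeg d u v | prec z w}}

/-- `g` is the value of the decomposition function of `I = (L(u,v))` at the monomial `m`:
`g` is the `≺`-smallest `w' ∈ L(u,v)` such that `m ∈ I_{⪯ w'}`. -/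
noncomputable def isDecompOf {n : ℕ} [NeZero n] (k : Type*) [Field k] (d : ℕ) (u v : Mon n)
    (m : Mon n) (g : Mon n) : Prop :=
  g ∈ lexSeg d u v ∧
  (monomial m (1 : k) : MvPolynomial (Fin n) k) ∈
      monomialIdeal k {z ∈ lexSeg d u v | prec z g ∨ z = g} ∧
  ∀ w' ∈ lexSeg d u v,
    (monomial m (1 : k) : MvPolynomial (Fin n) k) ∈
        monomialIdeal k {z ∈ lexSeg d u v | prec z w' ∨ z = w'} →
      g = w' ∨ prec g w'

/-- Reversing the variables: the `toLex` order on `revMon` exponent vectors is the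
lexicographic order induced by `x_n > x_{n-1} > ⋯ > x_1`. -/
def revMon {n : ℕ} (m : Mon n) : Mon n := Finsupp.equivMapDomain Fin.revPerm m

/-- The depth of `S/I` with respect to the graded maximal ideal `(x_1, …, x_n)`:
the maximal length of an `S/I`-regular sequence of elements of `(x_1, …, x_n)`. -/
noncomputable def ringDepth {n : ℕ} {k : Type*} [Field k]
    (I : Ideal (MvPolynomial (Fin n) k)) : ℕ :=
  sSup {r : ℕ | ∃ rs : List (MvPolynomial (Fin n) k), rs.length = r ∧
    (∀ x ∈ rs, x ∈ Ideal.span (Set.range (X : Fin n → MvPolynomial (Fin n) k))) ∧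
    RingTheory.Sequence.IsRegular (MvPolynomial (Fin n) k ⧸ I) rs}

section Toolkit
variable {n : ℕ}

/-- single i 1 -/
local notation "e(" i ")" => Finsupp.single i (1:ℕ)

lemma lexlt_iff {x y : Mon n} : toLex x < toLex y ↔ ∃ i, (∀ j, j < i → x j = y j) ∧ x i < y i :=
  Iff.rfl

lemma lexle_iff {x y : Mon n} : toLex x ≤ toLex y ↔ x = y ∨ toLex x < toLex y := by
  rw [le_iff_lt_or_eq]; constructor
  · rintro (h|h); · exact Or.inr h
    · exact Or.inl (by exact_mod_cast h)
  · rintro (h|h); · exact Or.inr (by exact_mod_cast h)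
    · exact Or.inl h

lemma monDeg_add (x y : Mon n) : monDeg (x + y) = monDeg x + monDeg y := by
  simp [monDeg, Finset.sum_add_distrib]

lemma monDeg_single (i : Fin n) (c : ℕ) : monDeg (Finsupp.single i c) = c := by
  simp [monDeg, Finsupp.single_apply]

lemma monDeg_eq_zero {x : Mon n} (h : monDeg x = 0) : x = 0 := by
  ext i
  have := Finset.sum_eq_zero_iff.mp h i (Finset.mem_univ i)
  simpa using this

lemma coord_le_monDeg (x : Mon n) (i : Fin n) : x i ≤ monDeg x :=
  Finset.single_le_sum (fun j _ => Nat.zero_le _) (Finset.mem_univ i)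

/-- extract a single from a coordinate -/
lemma exists_add_single {A : Mon n} {i : Fin n} (h : 1 ≤ A i) : ∃ B, A = B + e(i) := by
  refine ⟨A - Finsupp.single i 1, ?_⟩
  rw [tsub_add_cancel_of_le (Finsupp.single_le_iff.mpr h)]

lemma monDeg_one_single {x : Mon n} (h : monDeg x = 1) : ∃ i, x = e(i) := by
  have hx : x ≠ 0 := by
    intro h0; rw [h0] at h; simp [monDeg] at h
  obtain ⟨i, hi⟩ := Finsupp.ne_iff.mp hx
  simp only [Finsupp.coe_zero, Pi.zero_apply] at hi
  refine ⟨i, ?_⟩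
  have hxi : x i = 1 := le_antisymm (h ▸ coord_le_monDeg x i) (Nat.one_le_iff_ne_zero.mpr hi)
  ext j
  rcases eq_or_ne j i with rfl | hji
  · simp [hxi, Finsupp.single_apply]
  · have : x j + x i ≤ monDeg x := by
      have := Finset.add_sum_erase _ x (Finset.mem_univ i)
      have hj : x j ≤ ∑ k ∈ Finset.univ.erase i, x k :=
        Finset.single_le_sum (fun k _ => Nat.zero_le _)
          (Finset.mem_erase.mpr ⟨hji, Finset.mem_univ j⟩)
      calc x j + x i ≤ (∑ k ∈ Finset.univ.erase i, x k) + x i := by omega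
        _ = monDeg x := by rw [add_comm]; exact this
    rw [h, hxi] at this
    simp [Finsupp.single_apply, Ne.symm hji]
    omega

/-- divisor extraction -/
lemma exists_divisor_single {z m : Mon n} (hle : z ≤ m) (hdeg : monDeg m = monDeg z + 1) :
    ∃ τ, z + e(τ) = m := by
  have h1 : z + (m - z) = m := add_tsub_cancel_of_le hle
  have h2 : monDeg (m - z) = 1 := by
    have := monDeg_add z (m - z)
    rw [h1] at this; omega
  obtain ⟨τ, hτ⟩ := monDeg_one_single h2
  exact ⟨τ, by rw [← hτ, h1]⟩

/-- cancellation of lex by common summand -/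
lemma lex_add_lt_iff {c x y : Mon n} : toLex (c + x) < toLex (c + y) ↔ toLex x < toLex y := by
  rw [lexlt_iff, lexlt_iff]
  constructor
  · rintro ⟨i, h1, h2⟩
    exact ⟨i, fun j hj => by have := h1 j hj; simp only [Finsupp.add_apply] at this ⊢; omega,
      by simp only [Finsupp.add_apply] at h2; omega⟩
  · rintro ⟨i, h1, h2⟩
    exact ⟨i, fun j hj => by have := h1 j hj; simp only [Finsupp.add_apply]; omega,
      by simp only [Finsupp.add_apply]; omega⟩

lemma lex_add_le_iff {c x y : Mon n} : toLex (c + x) ≤ toLex (c + y) ↔ toLex x ≤ toLex y := by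
  rw [lexle_iff, lexle_iff, lex_add_lt_iff]
  constructor
  · rintro (h|h)
    · exact Or.inl (by ext j; have := DFunLike.congr_fun h j; simp only [Finsupp.add_apply] at this; omega)
    · exact Or.inr h
  · rintro (h|h)
    · exact Or.inl (by rw [h])
    · exact Or.inr h

/-- key comparison: if x + e(i) = y + e(j) and i < j then x <lex y -/
lemma lex_lt_of_add_single {x y : Mon n} {i j : Fin n} (h : x + e(i) = y + e(j)) (hij : i < j) :
    toLex x < toLex y := by
  rw [lexlt_iff]
  refine ⟨i, fun d hd => ?_, ?_⟩
  · have := DFunLike.congr_fun h d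
    simp only [Finsupp.add_apply, Finsupp.single_apply] at this
    have hdi : ¬ (i = d) := by intro hh; subst hh; exact absurd hd (lt_irrefl _)
    have hdj : ¬ (j = d) := by intro hh; subst hh; exact absurd (hd.trans hij) (lt_irrefl _)
    simpa [hdi, hdj] using this
  · have := DFunLike.congr_fun h i
    simp only [Finsupp.add_apply] at this
    have hji : (j ≠ i) := ne_of_gt hij
    rw [Finsupp.single_eq_same, Finsupp.single_eq_of_ne' hji] at this
    omega

lemma eq_of_add_single {x y : Mon n} {i : Fin n} (h : x + e(i) = y + e(i)) : x = y := by
  ext j; have := DFunLike.congr_fun h j; simp only [Finsupp.add_apply] at this; omega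

/-- first coordinate facts -/
lemma lex_lt_of_zero_lt [NeZero n] {x y : Mon n} (h : x 0 < y 0) : toLex x < toLex y :=
  lexlt_iff.mpr ⟨0, fun j hj => absurd hj (by simp [Fin.not_lt_zero]), h⟩

lemma zero_le_of_lexle [NeZero n] {x y : Mon n} (h : toLex x ≤ toLex y) : x 0 ≤ y 0 := by
  by_contra hc
  exact absurd (lex_lt_of_zero_lt (by omega)) (not_lt_of_ge h)



/-! ### prec lemmas -/

lemma prec_irrefl [NeZero n] (x : Mon n) : ¬ prec x x := by
  rintro (h | ⟨-, h⟩); · exact lt_irrefl _ h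
  · exact lt_irrefl _ h

lemma prec_trans [NeZero n] {a b c : Mon n} (h1 : prec a b) (h2 : prec b c) : prec a c := by
  rcases h1 with h1 | ⟨e1, l1⟩ <;> rcases h2 with h2 | ⟨e2, l2⟩
  · exact Or.inl (h1.trans h2)
  · exact Or.inl (e2 ▸ h1)
  · exact Or.inl (e1 ▸ h2)
  · exact Or.inr ⟨e1.trans e2, l2.trans l1⟩

/-! ### lexSeg lemmas -/

lemma mem_lexSeg_iff {d : ℕ} {u v w : Mon n} :
    w ∈ lexSeg d u v ↔ monDeg w = d ∧ toLex v ≤ toLex w ∧ toLex w ≤ toLex u := Iff.rfl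

/-! ### maxVar lemmas -/

lemma le_maxVar [NeZero n] {m : Mon n} {i : Fin n} (h : m i ≠ 0) : i ≤ maxVar m := by
  have hi : i ∈ m.support := Finsupp.mem_support_iff.mpr h
  have := Finset.le_max hi
  unfold maxVar
  cases hmax : m.support.max with
  | bot => rw [hmax] at this; exact absurd this (by simp)
  | coe a => rw [hmax] at this; simpa [WithBot.unbotD] using this

lemma maxVar_apply_pos [NeZero n] {m : Mon n} (h : m ≠ 0) : 1 ≤ m (maxVar m) := by
  have hs : m.support.Nonempty := Finsupp.support_nonempty_iff.mpr h
  obtain ⟨a, ha⟩ := Finset.max_of_nonempty hs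
  have hmem : a ∈ m.support := Finset.mem_of_max ha
  have : maxVar m = a := by unfold maxVar; rw [ha]; rfl
  rw [this]
  exact Nat.one_le_iff_ne_zero.mpr (Finsupp.mem_support_iff.mp hmem)

/-! ### monomial ideal membership -/

variable {k : Type*} [Field k]

lemma monomial_mem_monomialIdeal_iff {T : Set (Mon n)} {a : Mon n} :
    (monomial a (1:k) : MvPolynomial (Fin n) k) ∈ monomialIdeal k T ↔ ∃ t ∈ T, t ≤ a := by
  rw [monomialIdeal, mem_ideal_span_monomial_image]
  classical
  constructor
  · intro h
    exact h a (by simp [support_monomial])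
  · intro h xi hxi
    rw [support_monomial, if_neg (one_ne_zero)] at hxi
    simp only [Finset.mem_singleton] at hxi
    exact hxi ▸ h

end Toolkit

section MoreHelpers
variable {n : ℕ}
local notation "e(" i ")" => Finsupp.single i (1:ℕ)

lemma coord_pair_le_monDeg (f : Mon n) {i j : Fin n} (hij : i ≠ j) :
    f i + f j ≤ monDeg f := by
  have h1 := Finset.add_sum_erase _ f (Finset.mem_univ i)
  have h2 : f j ≤ ∑ k ∈ Finset.univ.erase i, f k :=
    Finset.single_le_sum (fun k _ => Nat.zero_le _)
      (Finset.mem_erase.mpr ⟨Ne.symm hij, Finset.mem_univ j⟩)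
  unfold monDeg
  omega

lemma lex_add_lt_iff_right {c x y : Mon n} :
    toLex (x + c) < toLex (y + c) ↔ toLex x < toLex y := by
  rw [add_comm x c, add_comm y c]; exact lex_add_lt_iff

lemma lex_single_lt {i j : Fin n} (h : i < j) : toLex (e(j) : Mon n) < toLex (e(i)) := by
  rw [lexlt_iff]
  refine ⟨i, fun d hd => ?_, ?_⟩
  · have hdi : i ≠ d := fun hh => absurd (hh ▸ hd) (lt_irrefl _)
    have hdj : j ≠ d := fun hh => absurd ((hh ▸ hd).trans h) (lt_irrefl _)
    rw [Finsupp.single_eq_of_ne' hdi, Finsupp.single_eq_of_ne' hdj]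
  · rw [Finsupp.single_eq_same, Finsupp.single_eq_of_ne' (ne_of_gt h)]
    omega

lemma lex_single_pairs_lt {i1 i2 j1 j2 : Fin n} (h1 : j1 < i1) (h2 : j1 < i2) (h3 : j1 ≤ j2) :
    toLex ((e(i1) + e(i2)) : Mon n) < toLex (e(j1) + e(j2)) := by
  rw [lexlt_iff]
  refine ⟨j1, fun d hd => ?_, ?_⟩
  · have ne1 : i1 ≠ d := fun hh => absurd ((hh ▸ hd).trans h1) (lt_irrefl _)
    have ne2 : i2 ≠ d := fun hh => absurd ((hh ▸ hd).trans h2) (lt_irrefl _)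
    have ne3 : j1 ≠ d := fun hh => absurd (hh ▸ hd) (lt_irrefl _)
    have ne4 : j2 ≠ d := fun hh => absurd (lt_of_lt_of_le (hh ▸ hd) h3) (lt_irrefl _)
    simp [Finsupp.single_eq_of_ne, ne1, ne2, ne3, ne4]
  · have ne1 : i1 ≠ j1 := ne_of_gt h1
    have ne2 : i2 ≠ j1 := ne_of_gt h2
    simp only [Finsupp.add_apply, Finsupp.single_eq_of_ne' ne1, Finsupp.single_eq_of_ne' ne2,
      Finsupp.single_eq_same]
    omega

end MoreHelpers

section LQStep
variable {n : ℕ} [NeZero n] {k : Type*} [Field k] {d : ℕ} {u v : Mon n}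

local notation "e(" i ")" => Finsupp.single i (1:ℕ)

lemma lq_step (hlq : hasLinearQuotientsWrt k (lexSeg d u v) prec) {w' z' : Mon n}
    (hw' : w' ∈ lexSeg d u v) (hz' : z' ∈ lexSeg d u v) (hprec : prec z' w') :
    ∃ i, w' i < z' i ∧ ∃ z ∈ lexSeg d u v, prec z w' ∧ z ≤ w' + e(i) := by
  obtain ⟨V, hV⟩ := hlq w' hw'
  set qv := z' - w' with hqv
  have hql : z' ≤ qv + w' := le_tsub_add
  have hmem : (monomial qv (1:k) : MvPolynomial (Fin n) k) ∈
      Submodule.colon (monomialIdeal k {z ∈ lexSeg d u v | prec z w'})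
        (Ideal.span {(monomial w' (1 : k) : MvPolynomial (Fin n) k)}) := by
    refine Submodule.mem_colon_span_singleton.mpr ?_
    rw [smul_eq_mul, monomial_mul, one_mul]
    exact monomial_mem_monomialIdeal_iff.mpr ⟨z', ⟨hz', hprec⟩, hql⟩
  rw [hV] at hmem
  have himg : ((fun i => (X i : MvPolynomial (Fin n) k)) '' V) =
      ((fun m => (monomial m (1:k) : MvPolynomial (Fin n) k)) ''
        ((fun i : Fin n => Finsupp.single i (1:ℕ)) '' V)) := by
    rw [Set.image_image]
    rfl
  rw [himg, mem_ideal_span_monomial_image] at hmem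
  have hsupp : qv ∈ (monomial qv (1:k) : MvPolynomial (Fin n) k).support := by
    classical
    rw [support_monomial, if_neg one_ne_zero]; simp
  obtain ⟨si, hsi, hsile⟩ := hmem qv hsupp
  obtain ⟨i, hiV, rfl⟩ := hsi
  have hi1 : 1 ≤ qv i := Finsupp.single_le_iff.mp hsile
  have hwi : w' i < z' i := by
    rw [hqv] at hi1
    rw [Finsupp.tsub_apply] at hi1
    omega
  refine ⟨i, hwi, ?_⟩
  have hXi : (X i : MvPolynomial (Fin n) k) ∈
      Ideal.span ((fun i => (X i : MvPolynomial (Fin n) k)) '' V) :=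
    Ideal.subset_span (Set.mem_image_of_mem _ hiV)
  rw [← hV] at hXi
  replace hXi := Submodule.mem_colon_span_singleton.mp hXi
  rw [smul_eq_mul] at hXi
  have hXm : (X i : MvPolynomial (Fin n) k) * monomial w' 1 = monomial (w' + e(i)) 1 := by
    rw [X, monomial_mul, one_mul, add_comm]
  rw [hXm] at hXi
  obtain ⟨z, ⟨hzL, hzprec⟩, hzle⟩ := monomial_mem_monomialIdeal_iff.mp hXi
  exact ⟨z, hzL, hzprec, hzle⟩

end LQStep

section Heart
variable {n : ℕ} [NeZero n] {k : Type*} [Field k] {d : ℕ} {u v : Mon n}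
local notation "e(" i ")" => Finsupp.single i (1:ℕ)

lemma fin_pos_of_ne_zero {x : Fin n} (h : x ≠ 0) : 0 < x := by
  rcases Nat.eq_zero_or_pos x.val with h0 | hp
  · exact absurd (Fin.ext (by simp [h0])) h
  · rw [Fin.lt_def]; simpa using hp

lemma apply_zero_eq_of_ne {z A : Mon n} {τ : Fin n} (h : z + e(τ) = A) (hτ : τ ≠ 0) :
    z 0 = A 0 := by
  have := DFunLike.congr_fun h 0
  simp only [Finsupp.add_apply, Finsupp.single_eq_of_ne' hτ] at this
  omega

lemma apply_other {z A : Mon n} {τ t : Fin n} (h : z + e(τ) = A) (ht : τ ≠ t) :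
    z t = A t := by
  have := DFunLike.congr_fun h t
  simp only [Finsupp.add_apply, Finsupp.single_eq_of_ne' ht] at this
  omega

lemma apply_self {z A : Mon n} {τ : Fin n} (h : z + e(τ) = A) : z τ + 1 = A τ := by
  have := DFunLike.congr_fun h τ
  simpa only [Finsupp.add_apply, Finsupp.single_eq_same] using this

theorem heart (hlq : hasLinearQuotientsWrt k (lexSeg d u v) prec)
    {A : Mon n} (hAdeg : monDeg A = d + 1) (hAlt : toLex A < toLex (v + e(0)))
    {p q r' : Fin n} {zp zq : Mon n}
    (hp0 : p ≠ 0) (hpq : p < q) (hqr' : q < r')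
    (hzpL : zp ∈ lexSeg d u v) (hzqL : zq ∈ lexSeg d u v)
    (hzp : zp + e(p) = A) (hzq : zq + e(q) = A) (hAr' : 1 ≤ A r') :
    ∃ zr' ∈ lexSeg d u v, zr' + e(r') = A := by
  classical
  by_contra hcon
  push_neg at hcon
  -- general facts
  have hdegz : ∀ {z : Mon n} {τ : Fin n}, z + e(τ) = A → monDeg z = d := by
    intro z τ h
    have := congrArg monDeg h
    rw [monDeg_add, monDeg_single] at this
    omega
  have hdiv0 : ∀ {z X : Mon n}, z + e(0) = X → toLex X ≤ toLex A → toLex v ≤ toLex z → False := by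
    intro z X h hXA hvz
    have h1 : toLex (z + e(0)) < toLex (v + e(0)) := h ▸ (lt_of_le_of_lt hXA hAlt)
    rw [add_comm z _, add_comm v _] at h1
    rw [lex_add_lt_iff] at h1
    exact absurd h1 (not_lt_of_ge hvz)
  -- the set D
  set D : Finset (Fin n) :=
    Finset.univ.filter (fun t => t ≠ 0 ∧ ∃ z ∈ lexSeg d u v, z + e(t) = A) with hD
  have hmemD : ∀ {t : Fin n}, t ∈ D ↔ (t ≠ 0 ∧ ∃ z ∈ lexSeg d u v, z + e(t) = A) := by
    intro t; rw [hD, Finset.mem_filter]; simp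
  have hq0 : q ≠ 0 := by
    intro h; rw [h] at hpq; exact absurd hpq (by simp [Fin.not_lt_zero])
  have hpD : p ∈ D := hmemD.mpr ⟨hp0, zp, hzpL, hzp⟩
  have hqD : q ∈ D := hmemD.mpr ⟨hq0, zq, hzqL, hzq⟩
  have hDne : D.Nonempty := ⟨p, hpD⟩
  set Q : Fin n := D.max' hDne with hQ
  have hQD : Q ∈ D := D.max'_mem hDne
  obtain ⟨hQ0, zQ, hzQL, hzQ⟩ := hmemD.mp hQD
  have hqQ : q ≤ Q := D.le_max' q hqD
  have hpQ : p < Q := lt_of_lt_of_le hpq hqQ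
  have hDne2 : (D.erase Q).Nonempty := ⟨p, Finset.mem_erase.mpr ⟨ne_of_lt hpQ, hpD⟩⟩
  set P : Fin n := (D.erase Q).max' hDne2 with hP
  have hPD' : P ∈ D.erase Q := (D.erase Q).max'_mem hDne2
  have hPQne : P ≠ Q := (Finset.mem_erase.mp hPD').1
  have hPD : P ∈ D := (Finset.mem_erase.mp hPD').2
  obtain ⟨hP0, zP, hzPL, hzP⟩ := hmemD.mp hPD
  have hPQ : P < Q := lt_of_le_of_ne (D.le_max' P hPD) hPQne
  have hmaxQ : ∀ t ∈ D, t ≤ Q := fun t ht => D.le_max' t ht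
  have hmaxP : ∀ t ∈ D, t ≠ Q → t ≤ P := fun t ht htQ =>
    (D.erase Q).le_max' t (Finset.mem_erase.mpr ⟨htQ, ht⟩)
  -- zr' := divisor at r', not in L
  obtain ⟨zr', hzr'⟩ := exists_add_single hAr'
  replace hzr' : zr' + e(r') = A := hzr'.symm
  have hzr'deg : monDeg zr' = d := hdegz hzr'
  have hvzq : toLex v ≤ toLex zq := hzqL.2.1
  have hzqzr' : toLex zq < toLex zr' := lex_lt_of_add_single (hzq.trans hzr'.symm) hqr'
  have hvzr' : toLex v ≤ toLex zr' := le_of_lt (lt_of_le_of_lt hvzq hzqzr')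
  have hulzr' : toLex u < toLex zr' := by
    by_contra hle
    exact hcon zr' ⟨hzr'deg, hvzr', le_of_not_gt hle⟩ hzr'
  -- r := maxVar A
  set r : Fin n := maxVar A with hrdef
  have hAne : A ≠ 0 := by
    intro h0
    rw [h0] at hAdeg; simp [monDeg] at hAdeg
  have hAr : 1 ≤ A r := maxVar_apply_pos hAne
  have hr'r : r' ≤ r := le_maxVar (by omega)
  obtain ⟨zr, hzr⟩ := exists_add_single hAr
  replace hzr : zr + e(r) = A := hzr.symm
  have hulzr : toLex u < toLex zr := by
    rcases lt_or_eq_of_le hr'r with hlt | heq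
    · exact hulzr'.trans (lex_lt_of_add_single (hzr'.trans hzr.symm) hlt)
    · subst heq
      rwa [eq_of_add_single (hzr'.trans hzr.symm)] at hulzr'
  -- Q < r
  have hAQ : 1 ≤ A Q := by have := apply_self hzQ; omega
  have hQr : Q < r := by
    rcases lt_or_eq_of_le (le_maxVar (show A Q ≠ 0 by omega)) with h | h
    · exact h
    · exfalso
      have : zQ = zr := eq_of_add_single (h ▸ hzQ |>.trans hzr.symm)
      exact absurd (this ▸ hzQL.2.2) (not_le_of_gt hulzr)
  have hr0 : r ≠ 0 := by
    intro h; rw [h] at hQr; exact absurd hQr (by simp [Fin.not_lt_zero])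
  -- T := min support index above Q
  set Tset : Finset (Fin n) := A.support.filter (fun t => Q < t) with hTset
  have hTsetne : Tset.Nonempty :=
    ⟨r, by rw [hTset, Finset.mem_filter]; exact ⟨Finsupp.mem_support_iff.mpr (by omega), hQr⟩⟩
  set T : Fin n := Tset.min' hTsetne with hT
  have hTmem : T ∈ Tset := Tset.min'_mem hTsetne
  have hQT : Q < T := (Finset.mem_filter.mp hTmem).2
  have hAT : 1 ≤ A T :=
    Nat.one_le_iff_ne_zero.mpr (Finsupp.mem_support_iff.mp (Finset.mem_filter.mp hTmem).1)
  have hTmin : ∀ t : Fin n, Q < t → 1 ≤ A t → T ≤ t := fun t h1 h2 =>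
    Tset.min'_le t (Finset.mem_filter.mpr ⟨Finsupp.mem_support_iff.mpr (by omega), h1⟩)
  -- H_T
  have H_T : ∀ (τ : Fin n) (z : Mon n), Q < τ → z + e(τ) = A → toLex u < toLex z := by
    intro τ z hQτ hz
    have hAτ : 1 ≤ A τ := by have := apply_self hz; omega
    have hTτ : T ≤ τ := hTmin τ hQτ hAτ
    obtain ⟨zT, hzT⟩ := exists_add_single hAT
    replace hzT : zT + e(T) = A := hzT.symm
    have hTD : T ∉ D := by
      intro hTD
      exact absurd (hmaxQ T hTD) (not_le_of_gt hQT)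
    have hT0 : T ≠ 0 := by
      intro h
      rw [h] at hQT
      exact absurd (lt_trans (fin_pos_of_ne_zero hQ0) hQT) (lt_irrefl _)
    have hzTnotL : zT ∉ lexSeg d u v := fun hL => hTD (hmemD.mpr ⟨hT0, zT, hL, hzT⟩)
    have hulzT : toLex u < toLex zT := by
      by_contra hle
      exact hzTnotL ⟨hdegz hzT,
        le_of_lt (lt_of_le_of_lt hvzq (lex_lt_of_add_single (hzq.trans hzT.symm) (lt_of_le_of_lt hqQ hQT))),
        le_of_not_gt hle⟩
    rcases lt_or_eq_of_le hTτ with hlt | heq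
    · exact hulzT.trans (lex_lt_of_add_single (hzT.trans hz.symm) hlt)
    · subst heq
      rwa [eq_of_add_single (hzT.trans hz.symm)] at hulzT
  -- C decomposition
  have hPne0' : (0:Fin n) < P := fin_pos_of_ne_zero hP0
  have hAP : 1 ≤ A P := by have := apply_self hzP; omega
  have hzQr : 1 ≤ zQ r := by
    have := apply_other hzQ (ne_of_lt hQr)
    omega
  obtain ⟨B, hB⟩ := exists_add_single hzQr
  have hBP : 1 ≤ B P := by
    have h1 := apply_other hzQ (ne_of_gt hPQ)   -- zQ P = A P
    have h2 : B P = zQ P := by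
      have := DFunLike.congr_fun hB P
      simp only [Finsupp.add_apply, Finsupp.single_eq_of_ne' (ne_of_gt (hPQ.trans hQr))] at this
      omega
    omega
  obtain ⟨C, hC⟩ := exists_add_single hBP
  -- zQ = C + e(P) + e(r)
  have hzQeq : zQ = C + e(P) + e(r) := by rw [hB, hC]
  have hAeq : A = C + e(P) + e(r) + e(Q) := by rw [← hzQ, hzQeq]
  -- zP and zr in terms of C
  have hzPeq : zP = C + e(r) + e(Q) := by
    have : (C + e(r) + e(Q)) + e(P) = A := by rw [hAeq]; abel
    exact eq_of_add_single (hzP.trans this.symm)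
  have hzreq : zr = C + e(P) + e(Q) := by
    have : (C + e(P) + e(Q)) + e(r) = A := by rw [hAeq]; abel
    exact eq_of_add_single (hzr.trans this.symm)
  -- ==== the element w' and first LQ application ====
  set w' : Mon n := C + e(Q) + e(Q) with hw'def
  have hCdeg : monDeg C + 3 = d + 1 := by
    have := congrArg monDeg hAeq
    simp only [monDeg_add, monDeg_single, hAdeg] at this
    omega
  have hw'deg : monDeg w' = d := by
    rw [hw'def, monDeg_add, monDeg_add, monDeg_single]; omega
  have hw'ltzQ : toLex w' < toLex zQ := by
    have h1 : w' = C + (e(Q) + e(Q)) := by rw [hw'def]; exact add_assoc _ _ _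
    have h2 : zQ = C + (e(P) + e(r)) := by rw [hzQeq]; exact add_assoc _ _ _
    rw [h1, h2, lex_add_lt_iff]
    exact lex_single_pairs_lt hPQ hPQ (le_of_lt (hPQ.trans hQr))
  have hzPltw' : toLex zP < toLex w' := by
    have h1 : zP = (C + e(Q)) + e(r) := by rw [hzPeq]; abel
    have h2 : w' = (C + e(Q)) + e(Q) := hw'def
    rw [h1, h2, lex_add_lt_iff]
    exact lex_single_lt hQr
  have hw'L : w' ∈ lexSeg d u v :=
    ⟨hw'deg, le_of_lt (lt_of_le_of_lt hzPL.2.1 hzPltw'),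
      le_of_lt (lt_of_lt_of_le hw'ltzQ hzQL.2.2)⟩
  have hzQ0C : zQ 0 = C 0 := by
    rw [hzQeq]
    simp only [Finsupp.add_apply, Finsupp.single_eq_of_ne' hP0, Finsupp.single_eq_of_ne' hr0]
    omega
  have hw'0C : w' 0 = C 0 := by
    rw [hw'def]
    simp only [Finsupp.add_apply, Finsupp.single_eq_of_ne' hQ0]
    omega
  have hprec1 : prec zQ w' := Or.inr ⟨by rw [hzQ0C, hw'0C], hw'ltzQ⟩
  obtain ⟨i, hi, z, hzL, hzprec, hzle⟩ := lq_step hlq hw'L hzQL hprec1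
  have hzQappl : ∀ t : Fin n, zQ t = C t + (if P = t then 1 else 0) + (if r = t then 1 else 0) := by
    intro t
    rw [hzQeq]
    simp [Finsupp.add_apply, Finsupp.single_apply]
  have hw'appl : ∀ t : Fin n, w' t = C t + (if Q = t then 1 else 0) + (if Q = t then 1 else 0) := by
    intro t
    rw [hw'def]
    simp [Finsupp.add_apply, Finsupp.single_apply]
  have hiPr : i = P ∨ i = r := by
    by_contra hc
    push_neg at hc
    obtain ⟨hiP, hir⟩ := hc
    have h1 := hzQappl i
    have h2 := hw'appl i
    rw [if_neg (fun h => hiP h.symm), if_neg (fun h => hir h.symm)] at h1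
    omega
  -- common: A < w' + e(P) in lex (used in branch i = P)
  have hAltNp : toLex A < toLex (w' + e(P)) := by
    have h1 : A = (C + e(P) + e(Q)) + e(r) := by rw [hAeq]; abel
    have h2 : w' + e(P) = (C + e(P) + e(Q)) + e(Q) := by rw [hw'def]; abel
    rw [h1, h2, lex_add_lt_iff]
    exact lex_single_lt hQr
  rcases hiPr with rfl | rfl
  · -- ===== branch i = P =====
    have hNdeg : monDeg (w' + e(P)) = monDeg z + 1 := by
      rw [monDeg_add, monDeg_single, hw'deg, hzL.1]
    obtain ⟨τ, hτ⟩ := exists_divisor_single hzle hNdeg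
    have hNpappl : ∀ t : Fin n, (w' + e(P)) t
        = C t + (if Q = t then 1 else 0) + (if Q = t then 1 else 0)
          + (if P = t then 1 else 0) := by
      intro t
      rw [Finsupp.add_apply, hw'appl t, Finsupp.single_apply]
    by_cases hτ0 : τ = 0
    · -- ==== LEAK-A : second LQ application ====
      subst hτ0
      have hz''0 : z 0 + 1 = C 0 := by
        have h1 := apply_self hτ
        have h2 : (w' + e(P)) 0 = C 0 := by
          rw [Finsupp.add_apply, Finsupp.single_eq_of_ne' hP0, hw'0C]
          omega
        omega
      have hz''Q : z Q = C Q + 2 := by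
        have h1 := apply_other hτ (Ne.symm hQ0)
        have h2 := hNpappl Q
        rw [if_pos rfl, if_neg (ne_of_lt hPQ)] at h2
        omega
      set F : Mon n := z.filter (fun t => t < Q) with hF
      set G : Mon n := z.filter (fun t => ¬ t < Q) with hG
      have hFG : F + G = z := Finsupp.filter_pos_add_filter_neg z _
      have hFGdeg : monDeg F + monDeg G = d := by
        have := congrArg monDeg hFG
        rw [monDeg_add, hzL.1] at this
        exact this
      set c : ℕ := monDeg G with hc
      have hGQ : G Q = z Q := by
        rw [hG]
        simp only [Finsupp.filter_apply]
        rw [if_pos (lt_irrefl Q)]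
      have hcge : z Q ≤ c := hGQ ▸ coord_le_monDeg G Q
      set z0 : Mon n := F + Finsupp.single Q c with hz0
      have hz0deg : monDeg z0 = d := by
        rw [hz0, monDeg_add, monDeg_single]; omega
      have hz0lt : ∀ t : Fin n, t < Q → z0 t = z t := by
        intro t ht
        rw [hz0]
        simp only [Finsupp.add_apply, Finsupp.filter_apply, hF]
        rw [if_pos ht, Finsupp.single_eq_of_ne' (ne_of_gt ht)]
        omega
      have hz0Q : z0 Q = c := by
        rw [hz0]
        simp only [Finsupp.add_apply, Finsupp.filter_apply, hF]
        rw [if_neg (lt_irrefl Q), Finsupp.single_eq_same]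
        omega
      have hz0gt : ∀ t : Fin n, Q < t → z0 t = 0 := by
        intro t ht
        rw [hz0]
        simp only [Finsupp.add_apply, Finsupp.filter_apply, hF]
        rw [if_neg (asymm ht), Finsupp.single_eq_of_ne' (ne_of_lt ht)]
        omega
      have hzlez0 : toLex z ≤ toLex z0 := by
        rcases lt_or_eq_of_le hcge with hlt | heq
        · exact le_of_lt (lexlt_iff.mpr ⟨Q, fun j hj => (hz0lt j hj).symm, hz0Q ▸ hlt⟩)
        · have : z = z0 := by
            ext t
            rcases lt_trichotomy t Q with h | h | h
            · exact (hz0lt t h).symm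
            · rw [h, hz0Q, ← heq]
            · rw [hz0gt t h]
              have hGt : G t = z t := by
                rw [hG]
                simp only [Finsupp.filter_apply]
                rw [if_pos (asymm h)]
              have := coord_pair_le_monDeg G (ne_of_gt h : t ≠ Q)
              rw [hGQ, ← hc] at this
              omega
          rw [this]
      have hCzQ0 : C 0 ≤ u 0 := by
        have := zero_le_of_lexle hzQL.2.2
        omega
      have hz0L : z0 ∈ lexSeg d u v := by
        refine ⟨hz0deg, le_trans hzL.2.1 hzlez0, le_of_lt (lex_lt_of_zero_lt ?_)⟩
        have h0Q : (0:Fin n) < Q := fin_pos_of_ne_zero hQ0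
        rw [hz0lt 0 h0Q]
        omega
      have hprec2 : prec z0 zQ := by
        left
        have h0Q : (0:Fin n) < Q := fin_pos_of_ne_zero hQ0
        rw [hz0lt 0 h0Q, hzQ0C]
        omega
      obtain ⟨i2, hi2, z2, hz2L, hz2prec, hz2le⟩ := lq_step hlq hzQL hz0L hprec2
      have hi2Q : i2 = Q := by
        rcases lt_trichotomy i2 Q with h | h | h
        · exfalso
          rcases eq_or_ne i2 0 with rfl | hi20
          · have h0Q : (0:Fin n) < Q := fin_pos_of_ne_zero hQ0
            have hx := hz0lt 0 h0Q
            omega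
          · have h1 : z0 i2 = z i2 := hz0lt i2 h
            have h2 : z i2 = (w' + e(P)) i2 := apply_other hτ (Ne.symm hi20)
            have h3 := hNpappl i2
            have h4 := hzQappl i2
            rw [if_neg (ne_of_gt (h.trans hQr))] at h4
            rw [if_neg (ne_of_gt h)] at h3
            omega
        · exact h
        · exfalso
          have hx := hz0gt i2 h
          omega
      subst hi2Q
      rw [hzQ] at hz2le
      have hN2deg : monDeg A = monDeg z2 + 1 := by rw [hAdeg, hz2L.1]
      obtain ⟨τ2, hτ2⟩ := exists_divisor_single hz2le hN2deg
      by_cases hτ20 : τ2 = 0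
      · subst hτ20
        exact hdiv0 hτ2 (le_refl _) hz2L.2.1
      · rcases hz2prec with hlt0 | ⟨heq0, hzQltz2⟩
        · have h1 : z2 0 = A 0 := apply_zero_eq_of_ne hτ2 hτ20
          have h2 : zQ 0 = A 0 := apply_zero_eq_of_ne hzQ hQ0
          omega
        · rcases lt_trichotomy τ2 Q with h | h | h
          · exact absurd (lex_lt_of_add_single (hτ2.trans hzQ.symm) h) (lt_asymm hzQltz2)
          · subst h
            rw [eq_of_add_single (hτ2.trans hzQ.symm)] at hzQltz2
            exact lt_irrefl _ hzQltz2
          · exact absurd hz2L.2.2 (not_le_of_gt (H_T τ2 z2 h hτ2))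
    · -- branch i = P, τ ≠ 0
      rcases hzprec with hlt0 | ⟨heq0, hw'ltz⟩
      · have h1 : z 0 = (w' + e(P)) 0 := apply_zero_eq_of_ne hτ hτ0
        have h2 : (w' + e(P)) 0 = w' 0 := by
          rw [Finsupp.add_apply, Finsupp.single_eq_of_ne' hP0]; omega
        omega
      · rcases lt_trichotomy τ P with h | h | h
        · exact absurd (lex_lt_of_add_single hτ h) (lt_asymm hw'ltz)
        · subst h
          rw [eq_of_add_single hτ] at hw'ltz
          exact lt_irrefl _ hw'ltz
        · -- τ > P
          have hzτA : ∀ {zz : Mon n}, zz + e(τ) = A → toLex zz < toLex z := by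
            intro zz hzz
            have : toLex (zz + e(τ)) < toLex (z + e(τ)) := by
              rw [hzz, hτ]; exact hAltNp
            exact lex_add_lt_iff_right.mp this
          rcases lt_trichotomy τ Q with h2 | h2 | h2
          · -- τ ∈ (P, Q) : contradiction with maximality of P
            have hNτ : (w' + e(P)) τ = C τ := by
              have h3 := hNpappl τ
              rw [if_neg (ne_of_gt h2), if_neg (ne_of_lt h)] at h3
              omega
            have hzτ1 : z τ + 1 = C τ := by
              have := apply_self hτ; omega
            have hAτ : 1 ≤ A τ := by
              have h4 := DFunLike.congr_fun hAeq τ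
              simp only [Finsupp.add_apply] at h4
              omega
            obtain ⟨zτ, hzτ⟩ := exists_add_single hAτ
            replace hzτ : zτ + e(τ) = A := hzτ.symm
            have hzτL : zτ ∈ lexSeg d u v := by
              refine ⟨hdegz hzτ, ?_, ?_⟩
              · exact le_of_lt (lt_of_le_of_lt hzPL.2.1
                  (lex_lt_of_add_single (hzP.trans hzτ.symm) h))
              · exact le_of_lt (lt_of_lt_of_le (hzτA hzτ) hzL.2.2)
            have hτ0' : τ ≠ 0 := hτ0
            have hτD : τ ∈ D := hmemD.mpr ⟨hτ0', zτ, hzτL, hzτ⟩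
            exact absurd (hmaxP τ hτD (ne_of_lt h2)) (not_le_of_gt h)
          · -- τ = Q : z = zr, contradiction
            rw [h2] at hτ
            have hNp' : w' + e(P) = (C + e(P) + e(Q)) + e(Q) := by rw [hw'def]; abel
            have hz_eq : z = C + e(P) + e(Q) := eq_of_add_single (hτ.trans hNp')
            rw [← hzreq] at hz_eq
            rw [hz_eq] at hzL
            exact absurd hzL.2.2 (not_le_of_gt hulzr)
          · -- τ > Q
            have hAτ : 1 ≤ A τ := by
              have hNτ : C τ ≤ (w' + e(P)) τ := by
                have h3 := hNpappl τ
                omega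
              have hzτ1 := apply_self hτ
              have h4 := DFunLike.congr_fun hAeq τ
              simp only [Finsupp.add_apply] at h4
              have h5 : (w' + e(P)) τ = C τ := by
                have h3 := hNpappl τ
                rw [if_neg (ne_of_lt h2), if_neg (ne_of_lt (hPQ.trans h2))] at h3
                omega
              omega
            obtain ⟨zτ, hzτ⟩ := exists_add_single hAτ
            replace hzτ : zτ + e(τ) = A := hzτ.symm
            have h6 : toLex u < toLex zτ := H_T τ zτ h2 hzτ
            exact absurd hzL.2.2 (not_le_of_gt (h6.trans (hzτA hzτ)))
  · -- ===== branch i = r =====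
    have hNdeg : monDeg (w' + e(r)) = monDeg z + 1 := by
      rw [monDeg_add, monDeg_single, hw'deg, hzL.1]
    obtain ⟨τ, hτ⟩ := exists_divisor_single hzle hNdeg
    by_cases hτ0 : τ = 0
    · subst hτ0
      have hNrA : toLex (w' + e(r)) < toLex A := by
        have h1 : w' + e(r) = (C + e(Q) + e(r)) + e(Q) := by rw [hw'def]; abel
        have h2 : A = (C + e(Q) + e(r)) + e(P) := by rw [hAeq]; abel
        rw [h1, h2, lex_add_lt_iff]
        exact lex_single_lt hPQ
      exact hdiv0 hτ (le_of_lt hNrA) hzL.2.1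
    · rcases hzprec with hlt0 | ⟨heq0, hw'ltz⟩
      · have h1 : z 0 = (w' + e(r)) 0 := apply_zero_eq_of_ne hτ hτ0
        have h2 : (w' + e(r)) 0 = w' 0 := by
          rw [Finsupp.add_apply, Finsupp.single_eq_of_ne' hr0]; omega
        omega
      · rcases lt_trichotomy τ r with h | h | h
        · exact absurd (lex_lt_of_add_single hτ h) (lt_asymm hw'ltz)
        · subst h
          rw [eq_of_add_single hτ] at hw'ltz
          exact lt_irrefl _ hw'ltz
        · -- τ > r : contradiction with maxVar
          have h1 := apply_self hτ
          have h2 : (w' + e(r)) τ = C τ := by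
            rw [Finsupp.add_apply, hw'appl τ, if_neg (ne_of_lt (hQr.trans h)),
              Finsupp.single_eq_of_ne' (ne_of_lt h)]
            omega
          have h4 := DFunLike.congr_fun hAeq τ
          simp only [Finsupp.add_apply] at h4
          have hAτ : A τ ≠ 0 := by omega
          exact absurd (le_maxVar hAτ) (not_le_of_gt h)


end Heart


/-- Formula for the decomposition function of a completely lexsegment ideal with linear
quotients with respect to `≺` : for `w ∈ L(u,v)` and `s ∈ set(w)`,
`g(x_s w) = x_s w / x_1` if `x_s w ≥_lex x_1 v`, and `g(x_s w) = x_s w / x_{max(w)}` if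
`x_s w <_lex x_1 v`. -/
theorem decomposition_function_formula {n : ℕ} [NeZero n] (hn : 2 ≤ n) (k : Type*) [Field k]
    (d : ℕ) (hd : 2 ≤ d) (u v : Mon n) (hu : monDeg u = d) (hv : monDeg v = d)
    (ha1 : 0 < u 0) (huv : toLex v ≤ toLex u)
    (hcl : IsCompletelyLexSeg (lexSeg d u v))
    (hlq : hasLinearQuotientsWrt k (lexSeg d u v) prec) :
    ∀ w ∈ lexSeg d u v, ∀ s ∈ setW k d u v w,
      (toLex (v + Finsupp.single 0 1) ≤ toLex (w + Finsupp.single s 1) →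
        isDecompOf k d u v (w + Finsupp.single s 1)
          (w + Finsupp.single s 1 - Finsupp.single 0 1)) ∧
      (toLex (w + Finsupp.single s 1) < toLex (v + Finsupp.single 0 1) →
        isDecompOf k d u v (w + Finsupp.single s 1)
          (w + Finsupp.single s 1 - Finsupp.single (maxVar w) 1)) := by
  classical
  intro w hw s hs
  set m : Mon n := w + Finsupp.single s 1 with hmdef
  have hmdeg : monDeg m = d + 1 := by
    rw [hmdef, monDeg_add, monDeg_single, hw.1]
  have hcomb : ∀ {G z w' : Mon n}, (G = z ∨ prec G z) → (prec z w' ∨ z = w') →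
      (G = w' ∨ prec G w') := by
    rintro G z w' (rfl | h1) (h2 | rfl)
    · exact Or.inr h2
    · exact Or.inl rfl
    · exact Or.inr (prec_trans h1 h2)
    · exact Or.inr h1
  constructor
  · -- ===== Case 1 : m ≥ x1 v =====
    intro hge
    have hm0 : 1 ≤ m 0 := by
      have h1 := zero_le_of_lexle hge
      have h2 : ((v + Finsupp.single 0 1 : Mon n)) 0 = v 0 + 1 := by
        rw [Finsupp.add_apply, Finsupp.single_eq_same]
      omega
    obtain ⟨G, hG⟩ := exists_add_single hm0
    have hGe : G + Finsupp.single 0 1 = m := hG.symm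
    have hGsub : m - Finsupp.single 0 1 = G := by rw [← hGe, add_tsub_cancel_right]
    rw [hGsub]
    have hGdeg : monDeg G = d := by
      have := congrArg monDeg hGe
      rw [monDeg_add, monDeg_single, hmdeg] at this
      omega
    have hvG : toLex v ≤ toLex G := by
      have h1 : toLex (v + Finsupp.single 0 1) ≤ toLex (G + Finsupp.single 0 1) := hGe ▸ hge
      rw [add_comm v _, add_comm G _, lex_add_le_iff] at h1
      exact h1
    have hGu : toLex G ≤ toLex u := by
      rcases eq_or_ne s 0 with rfl | hs0
      · have : G = w := eq_of_add_single (hGe.trans hmdef)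
        rw [this]
        exact hw.2.2
      · have h1 : m 0 = w 0 := by
          rw [hmdef, Finsupp.add_apply, Finsupp.single_eq_of_ne' hs0]
          omega
        have h2 : G 0 + 1 = m 0 := apply_self hGe
        have h3 := zero_le_of_lexle hw.2.2
        exact le_of_lt (lex_lt_of_zero_lt (by omega))
    have hGL : G ∈ lexSeg d u v := ⟨hGdeg, hvG, hGu⟩
    refine ⟨hGL, ?_, ?_⟩
    · exact monomial_mem_monomialIdeal_iff.mpr ⟨G, ⟨hGL, Or.inr rfl⟩, hGe ▸ self_le_add_right G _⟩
    · intro w' hw'L hmem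
      obtain ⟨z, ⟨hzL, hzc⟩, hzle⟩ := monomial_mem_monomialIdeal_iff.mp hmem
      obtain ⟨τ, hτ⟩ := exists_divisor_single hzle (by rw [hmdeg, hzL.1])
      refine hcomb ?_ hzc
      rcases eq_or_ne τ 0 with rfl | hτ0
      · exact Or.inl (eq_of_add_single (hGe.trans hτ.symm))
      · have h1 : z 0 = m 0 := apply_zero_eq_of_ne hτ hτ0
        have h2 : G 0 + 1 = m 0 := apply_self hGe
        exact Or.inr (Or.inl (by omega))
  · -- ===== Case 2 : m < x1 v =====
    intro hlt
    have hno0 : ∀ {z' : Mon n}, z' + Finsupp.single 0 1 = m → toLex v ≤ toLex z' → False := by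
      intro z' h hvz
      have h1 : toLex (z' + Finsupp.single 0 1) < toLex (v + Finsupp.single 0 1) := h ▸ hlt
      rw [add_comm z' _, add_comm v _, lex_add_lt_iff] at h1
      exact absurd h1 (not_lt_of_ge hvz)
    obtain ⟨z₀, ⟨hz₀L, hz₀p⟩, hz₀le⟩ := monomial_mem_monomialIdeal_iff.mp hs
    obtain ⟨t₀, ht₀⟩ := exists_divisor_single hz₀le (by rw [hmdeg, hz₀L.1])
    have hs0 : s ≠ 0 := by
      rintro rfl
      rcases eq_or_ne t₀ 0 with rfl | ht₀0
      · have : z₀ = w := eq_of_add_single (ht₀.trans hmdef)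
        rw [this] at hz₀p
        exact prec_irrefl w hz₀p
      · have h1 : z₀ 0 = m 0 := apply_zero_eq_of_ne ht₀ ht₀0
        have h2 : w 0 + 1 = m 0 := apply_self hmdef.symm
        rcases hz₀p with h | ⟨h, -⟩ <;> omega
    have hm0w : m 0 = w 0 := by
      rw [hmdef, Finsupp.add_apply, Finsupp.single_eq_of_ne' hs0]
      omega
    have ht₀0 : t₀ ≠ 0 := by
      rintro rfl
      exact hno0 ht₀ hz₀L.2.1
    have hwlexz₀ : toLex w < toLex z₀ := by
      rcases hz₀p with h | ⟨-, h⟩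
      · exfalso
        have h1 : z₀ 0 = m 0 := apply_zero_eq_of_ne ht₀ ht₀0
        omega
      · exact h
    have hst₀ : s < t₀ := by
      rcases lt_trichotomy s t₀ with h | h | h
      · exact h
      · exfalso
        rw [← h] at ht₀
        have : z₀ = w := eq_of_add_single (ht₀.trans hmdef)
        rw [this] at hwlexz₀
        exact lt_irrefl _ hwlexz₀
      · exfalso
        exact absurd (lex_lt_of_add_single (ht₀.trans hmdef) h) (lt_asymm hwlexz₀)
    have hwne : w ≠ 0 := by
      intro h0
      have := hw.1
      rw [h0] at this
      simp [monDeg] at this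
      omega
    have hwM : 1 ≤ w (maxVar w) := maxVar_apply_pos hwne
    have hwt₀ : 1 ≤ w t₀ := by
      have h1 : z₀ t₀ + 1 = m t₀ := apply_self ht₀
      have h2 : m t₀ = w t₀ := by
        rw [hmdef, Finsupp.add_apply, Finsupp.single_eq_of_ne' (ne_of_lt hst₀)]
        omega
      omega
    have ht₀M : t₀ ≤ maxVar w := le_maxVar (by omega)
    have hsM : s < maxVar w := lt_of_lt_of_le hst₀ ht₀M
    have hmM : 1 ≤ m (maxVar w) := by
      rcases eq_or_ne s (maxVar w) with h | h
      · have : m (maxVar w) = w (maxVar w) + 1 := by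
          rw [hmdef, Finsupp.add_apply, h, Finsupp.single_eq_same]
        omega
      · have : m (maxVar w) = w (maxVar w) := by
          rw [hmdef, Finsupp.add_apply, Finsupp.single_eq_of_ne' h]
          omega
        omega
    have hGex : ∃ G ∈ lexSeg d u v, G + Finsupp.single (maxVar w) 1 = m := by
      rcases eq_or_lt_of_le ht₀M with heq | hlt2
      · exact ⟨z₀, hz₀L, heq ▸ ht₀⟩
      · exact heart hlq hmdeg hlt hs0 hst₀ hlt2 hw hz₀L hmdef.symm ht₀ hmM
    obtain ⟨G, hGL, hGe⟩ := hGex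
    have hGsub : m - Finsupp.single (maxVar w) 1 = G := by rw [← hGe, add_tsub_cancel_right]
    rw [hGsub]
    have hM0 : maxVar w ≠ 0 := by
      intro h
      rw [h] at hsM
      exact absurd hsM (by simp [Fin.not_lt_zero])
    refine ⟨hGL, ?_, ?_⟩
    · exact monomial_mem_monomialIdeal_iff.mpr ⟨G, ⟨hGL, Or.inr rfl⟩, hGe ▸ self_le_add_right G _⟩
    · intro w' hw'L hmem
      obtain ⟨z, ⟨hzL, hzc⟩, hzle⟩ := monomial_mem_monomialIdeal_iff.mp hmem
      obtain ⟨τ, hτ⟩ := exists_divisor_single hzle (by rw [hmdeg, hzL.1])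
      refine hcomb ?_ hzc
      rcases eq_or_ne τ 0 with rfl | hτ0
      · exact absurd (hno0 hτ hzL.2.1) (fun h => h)
      · have hτM : τ ≤ maxVar w := by
          rcases eq_or_ne s τ with h | h
          · rw [← h]
            exact le_of_lt hsM
          · have h1 : z τ + 1 = m τ := apply_self hτ
            have h2 : m τ = w τ := by
              rw [hmdef, Finsupp.add_apply, Finsupp.single_eq_of_ne' h]
              omega
            exact le_maxVar (by omega)
        rcases lt_or_eq_of_le hτM with h | h
        · have h1 : z 0 = m 0 := apply_zero_eq_of_ne hτ hτ0
          have h2 : G 0 = m 0 := apply_zero_eq_of_ne hGe hM0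
          exact Or.inr (Or.inr ⟨by omega, lex_lt_of_add_single (hτ.trans hGe.symm) h⟩)
        · rw [h] at hτ
          exact Or.inl (eq_of_add_single (hGe.trans hτ.symm))
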